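/- Let ψ : ℕ → ℝ₊ be an approximating function with lower order τ_ψ := liminf_{t→∞} (−log ψ(t))/(log t) < ∞. Then for every real s with m − 1 < s < m − 1 + (n+1)/τ_ψ, the series Σ_{a ∈ ℤ^{n+1}\{0}} ψ(‖a‖)^{s+1−m} diverges. -/

import Mathlib

open Filter
open scoped BigOperators

/-- If the lower order `τ_ψ = liminf_{t→∞} (−log ψ(t))/(log t)` of `1/ψ`
is finite (expressed by the standard `ε`-characterisation of a finite liminf `τ`), then
for every `s` with `m − 1 < s < m − 1 + (n+1)/τ` the series
`Σ_{a ∈ ℤ^{n+1}\{0}} ψ(‖a‖)^{s+1−m}` diverges. -/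
theorem divergence_below_critical_exponent (n m : ℕ) (hn : 1 ≤ n) (hm : 1 ≤ m)
    (ψ : ℕ → ℝ) (hpos : ∀ k : ℕ, 1 ≤ k → 0 < ψ k) (hmono : Antitone ψ)
    (τ : ℝ)
    (hlb : ∀ ε : ℝ, 0 < ε →
      ∀ᶠ t : ℕ in atTop, τ - ε < -Real.log (ψ t) / Real.log t)
    (hub : ∀ ε : ℝ, 0 < ε →
      ∃ᶠ t : ℕ in atTop, -Real.log (ψ t) / Real.log t < τ + ε)
    (s : ℝ) (h1 : (m : ℝ) - 1 < s) (h2 : s < (m : ℝ) - 1 + ((n : ℝ) + 1) / τ) :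
    ¬ Summable fun a : {a : Fin (n + 1) → ℤ // a ≠ 0} =>
      ψ (Finset.univ.sup fun i => ((a : Fin (n + 1) → ℤ) i).natAbs) ^ (s + 1 - m) := by
  intro hsum
  set σ : ℝ := s + 1 - m with hσdef
  have hσ : 0 < σ := by simp only [hσdef]; linarith
  -- τ must be positive
  have hτ : 0 < τ := by
    by_contra h
    push_neg at h
    have : ((n : ℝ) + 1) / τ ≤ 0 := div_nonpos_of_nonneg_of_nonpos (by positivity) h
    linarith
  have hστ : σ * τ < (n : ℝ) + 1 := by
    have : σ < ((n : ℝ) + 1) / τ := by simp only [hσdef]; linarith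
    calc σ * τ < ((n : ℝ) + 1) / τ * τ := by exact mul_lt_mul_of_pos_right this hτ
    _ = (n : ℝ) + 1 := div_mul_cancel₀ _ (ne_of_gt hτ)
  set ε : ℝ := (((n : ℝ) + 1) - σ * τ) / (2 * σ) with hεdef
  have hε : 0 < ε := by apply div_pos <;> [linarith; positivity]
  set δ : ℝ := ((n : ℝ) + 1) - σ * (τ + ε) with hδdef
  have hδ : 0 < δ := by
    have : σ * ε = (((n : ℝ) + 1) - σ * τ) / 2 := by
      rw [hεdef]; field_simp
    simp only [hδdef]; nlinarith
  -- nonnegativity of terms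
  have hsup1 : ∀ a : {a : Fin (n + 1) → ℤ // a ≠ 0},
      1 ≤ Finset.univ.sup fun i => ((a : Fin (n + 1) → ℤ) i).natAbs := by
    intro a
    obtain ⟨i, hi⟩ := Function.ne_iff.mp a.2
    have h1' : 1 ≤ ((a : Fin (n + 1) → ℤ) i).natAbs := by
      simp only [Pi.zero_apply] at hi; omega
    exact le_trans h1' (Finset.le_sup (f := fun j => ((a : Fin (n + 1) → ℤ) j).natAbs) (Finset.mem_univ i))
  have hfnn : ∀ a : {a : Fin (n + 1) → ℤ // a ≠ 0},
      0 ≤ ψ (Finset.univ.sup fun i => ((a : Fin (n + 1) → ℤ) i).natAbs) ^ σ := by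
    intro a
    exact Real.rpow_nonneg (le_of_lt (hpos _ (hsup1 a))) _
  set T : ℝ := ∑' a : {a : Fin (n + 1) → ℤ // a ≠ 0},
      ψ (Finset.univ.sup fun i => ((a : Fin (n + 1) → ℤ) i).natAbs) ^ σ with hT
  -- find a big t with ψ t > t^(-(τ+ε)) and (t:ℝ)^δ > T
  have hev : ∀ᶠ t : ℕ in atTop, T < (t : ℝ) ^ δ ∧ 2 ≤ t := by
    have h1' : Tendsto (fun t : ℕ => (t : ℝ) ^ δ) atTop atTop :=
      (tendsto_rpow_atTop hδ).comp tendsto_natCast_atTop_atTop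
    exact (h1'.eventually_gt_atTop T).and (eventually_ge_atTop 2)
  obtain ⟨t, hrat, hTt, ht2⟩ := ((hub ε hε).and_eventually hev).exists
  have htpos : (0 : ℝ) < t := by positivity
  have hψt : (t : ℝ) ^ (-(τ + ε)) < ψ t := by
    have hlogt : 0 < Real.log t := Real.log_pos (by exact_mod_cast ht2)
    have h' : -Real.log (ψ t) < (τ + ε) * Real.log t := by
      rw [div_lt_iff₀ hlogt] at hrat; linarith
    have hψpos : 0 < ψ t := hpos t (by omega)
    have : Real.log ((t : ℝ) ^ (-(τ + ε))) < Real.log (ψ t) := by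
      rw [Real.log_rpow htpos]; linarith
    calc (t : ℝ) ^ (-(τ + ε)) = Real.exp (Real.log ((t : ℝ) ^ (-(τ + ε)))) := by
          rw [Real.exp_log (Real.rpow_pos_of_pos htpos _)]
      _ < Real.exp (Real.log (ψ t)) := Real.exp_lt_exp.mpr this
      _ = ψ t := Real.exp_log hψpos
  -- the injection from (Fin (n+1) → Fin t)
  have htne : NeZero t := ⟨by omega⟩
  set F : (Fin (n + 1) → Fin t) → {a : Fin (n + 1) → ℤ // a ≠ 0} :=
    fun b => ⟨fun i => (b i : ℤ) + 1, by
      intro h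
      have := congrFun h 0
      simp only [Pi.zero_apply] at this
      have hb : (0 : ℤ) ≤ (b 0 : ℤ) := Int.natCast_nonneg _
      omega⟩ with hF
  have hFinj : Function.Injective F := by
    intro b b' h
    funext i
    have h' := congrFun (congrArg Subtype.val h) i
    simp only [hF] at h'
    have : ((b i : ℕ) : ℤ) = ((b' i : ℕ) : ℤ) := by omega
    exact Fin.ext (by exact_mod_cast this)
  have hFsup : ∀ b, (Finset.univ.sup fun i => (((F b : Fin (n + 1) → ℤ)) i).natAbs) ≤ t := by
    intro b
    apply Finset.sup_le
    intro i _
    simp only [hF]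
    have : ((b i : ℤ) + 1).natAbs = (b i : ℕ) + 1 := by
      have hb : (0 : ℤ) ≤ (b i : ℤ) := Int.natCast_nonneg _
      omega
    rw [this]
    exact (b i).isLt
  -- lower bound each term
  have hterm : ∀ b : Fin (n + 1) → Fin t,
      (t : ℝ) ^ (-(τ + ε) * σ) ≤
        ψ (Finset.univ.sup fun i => (((F b : Fin (n + 1) → ℤ)) i).natAbs) ^ σ := by
    intro b
    have h1' : ψ t ≤ ψ (Finset.univ.sup fun i => (((F b : Fin (n + 1) → ℤ)) i).natAbs) :=
      hmono (hFsup b)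
    have h2' : (t : ℝ) ^ (-(τ + ε)) ≤ ψ (Finset.univ.sup fun i => (((F b : Fin (n + 1) → ℤ)) i).natAbs) :=
      le_trans (le_of_lt hψt) h1'
    calc (t : ℝ) ^ (-(τ + ε) * σ) = ((t : ℝ) ^ (-(τ + ε))) ^ σ := by
          rw [← Real.rpow_mul (le_of_lt htpos)]
      _ ≤ _ := Real.rpow_le_rpow (Real.rpow_nonneg (le_of_lt htpos) _) h2' (le_of_lt hσ)
  -- sum over the image finset
  have hsumle : ∑ b : Fin (n + 1) → Fin t,
      ψ (Finset.univ.sup fun i => (((F b : Fin (n + 1) → ℤ)) i).natAbs) ^ σ ≤ T := by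
    have himg : ∑ a ∈ Finset.univ.image F,
        (fun a : {a : Fin (n + 1) → ℤ // a ≠ 0} =>
          ψ (Finset.univ.sup fun i => ((a : Fin (n + 1) → ℤ) i).natAbs) ^ σ) a
        = ∑ b : Fin (n + 1) → Fin t,
          ψ (Finset.univ.sup fun i => (((F b : Fin (n + 1) → ℤ)) i).natAbs) ^ σ :=
      Finset.sum_image (fun x _ y _ h => hFinj h)
    rw [← himg]
    exact Summable.sum_le_tsum _ (fun a _ => hfnn a) hsum
  have hcard : (Finset.univ : Finset (Fin (n + 1) → Fin t)).card = t ^ (n + 1) := by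
    simp [Finset.card_univ]
  have hlow : (t : ℝ) ^ δ ≤ ∑ b : Fin (n + 1) → Fin t,
      ψ (Finset.univ.sup fun i => (((F b : Fin (n + 1) → ℤ)) i).natAbs) ^ σ := by
    have := Finset.card_nsmul_le_sum (Finset.univ : Finset (Fin (n + 1) → Fin t)) _ _
      (fun b _ => hterm b)
    rw [hcard, nsmul_eq_mul] at this
    calc (t : ℝ) ^ δ = (t : ℝ) ^ (((n : ℝ) + 1) + (-(τ + ε) * σ)) := by
          congr 1; simp only [hδdef]; ring
      _ = (t : ℝ) ^ ((n : ℝ) + 1) * (t : ℝ) ^ (-(τ + ε) * σ) := Real.rpow_add htpos _ _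
      _ = ((t ^ (n + 1) : ℕ) : ℝ) * (t : ℝ) ^ (-(τ + ε) * σ) := by
          congr 1
          rw [show ((n : ℝ) + 1) = ((n + 1 : ℕ) : ℝ) by push_cast; ring,
            Real.rpow_natCast]
          push_cast; ring
      _ ≤ _ := this
  linarith [le_trans hlow hsumle]
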